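/- Let d ≥ 1 be an integer that is not a perfect cube and let z ≥ 1 be an integer, and let A_n, B_n, C_n be the convergent sequences of the periodic bifurcating continued fraction [{z, 2z/d, repeat(3dz/(z³+d²), 3z, 3z/d)}, {0, −z²/d, repeat(−3z²/(z³+d²), −3dz²/(z³+d²), −3z²/d)}]. Then the sequence of real numbers A_n/C_n converges to d^{2/3} (the real cube root of d²) and the sequence B_n/C_n converges to d^{1/3} (the real cube root of d), as n → ∞. -/

import Mathlib

open Filter Topology

/-- The convergent sequences of the bifurcating continued fraction
`[{p_0,p_1,...},{q_0,q_1,...}]`, shifted by two: `bcf p q x0 x1 x2 m = X_{m-2}`,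
where `X_{-2} = x0`, `X_{-1} = x1`, `X_0 = x2` and
`X_n = p_n X_{n-1} + q_n X_{n-2} + X_{n-3}` for `n ≥ 1`.
So `A_n = bcf p q 0 1 (p 0) (n+2)`, `B_n = bcf p q 1 0 (q 0) (n+2)`,
`C_n = bcf p q 0 0 1 (n+2)`. -/
def bcf (p q : ℕ → ℚ) (x0 x1 x2 : ℚ) : ℕ → ℚ
  | 0 => x0
  | 1 => x1
  | 2 => x2
  | n + 3 =>
      p (n + 1) * bcf p q x0 x1 x2 (n + 2) + q (n + 1) * bcf p q x0 x1 x2 (n + 1)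
        + bcf p q x0 x1 x2 n

/-- For `d ≥ 1` not a perfect cube and `z ≥ 1`, the convergents of the periodic
bifurcating continued fraction `[{z, 2z/d, repeat(3dz/(z³+d²), 3z, 3z/d)},
{0, −z²/d, repeat(−3z²/(z³+d²), −3dz²/(z³+d²), −3z²/d)}]` satisfy
`A_n/C_n → d^{2/3}` and `B_n/C_n → d^{1/3}` as `n → ∞`. -/
theorem bcf_convergents_tendsto_cbrt (d z : ℤ) (hd : 1 ≤ d)
    (hdcube : ¬ ∃ m : ℤ, m ^ 3 = d) (hz : 1 ≤ z)
    (p q : ℕ → ℚ)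
    (hp0 : p 0 = (z : ℚ))
    (hp1 : p 1 = 2 * (z : ℚ) / (d : ℚ))
    (hq0 : q 0 = 0)
    (hq1 : q 1 = -(z : ℚ) ^ 2 / (d : ℚ))
    (hp2 : ∀ n, 2 ≤ n → n % 3 = 2 →
      p n = 3 * (d : ℚ) * (z : ℚ) / ((z : ℚ) ^ 3 + (d : ℚ) ^ 2))
    (hq2 : ∀ n, 2 ≤ n → n % 3 = 2 →
      q n = -(3 * (z : ℚ) ^ 2) / ((z : ℚ) ^ 3 + (d : ℚ) ^ 2))
    (hp3 : ∀ n, 2 ≤ n → n % 3 = 0 → p n = 3 * (z : ℚ))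
    (hq3 : ∀ n, 2 ≤ n → n % 3 = 0 →
      q n = -(3 * (d : ℚ) * (z : ℚ) ^ 2) / ((z : ℚ) ^ 3 + (d : ℚ) ^ 2))
    (hp4 : ∀ n, 2 ≤ n → n % 3 = 1 → p n = 3 * (z : ℚ) / (d : ℚ))
    (hq4 : ∀ n, 2 ≤ n → n % 3 = 1 → q n = -(3 * (z : ℚ) ^ 2) / (d : ℚ)) :
    Tendsto (fun n : ℕ =>
        ((bcf p q 0 1 (p 0) (n + 2) : ℚ) : ℝ) / ((bcf p q 0 0 1 (n + 2) : ℚ) : ℝ))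
      atTop (𝓝 ((d : ℝ) ^ ((2 : ℝ) / 3))) ∧
    Tendsto (fun n : ℕ =>
        ((bcf p q 1 0 (q 0) (n + 2) : ℚ) : ℝ) / ((bcf p q 0 0 1 (n + 2) : ℚ) : ℝ))
      atTop (𝓝 ((d : ℝ) ^ ((1 : ℝ) / 3))) := by
  -- positivity basics
  have hd0R : (0:ℝ) < (d:ℝ) := by exact_mod_cast hd
  have hz0R : (0:ℝ) < (z:ℝ) := by exact_mod_cast hz
  have hdC0 : (d:ℂ) ≠ 0 := Int.cast_ne_zero.mpr (by omega)
  have hicd : ((d:ℂ))⁻¹ * (d:ℂ) = 1 := inv_mul_cancel₀ hdC0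
  -- the real cube root
  set α : ℝ := (d:ℝ) ^ ((1:ℝ)/3) with hαdef
  have hα0 : 0 < α := Real.rpow_pos_of_pos hd0R _
  have hα3 : α ^ 3 = (d:ℝ) := by
    rw [hαdef, ← Real.rpow_natCast ((d:ℝ)^((1:ℝ)/3)) 3, ← Real.rpow_mul hd0R.le]
    norm_num
  have hαC3 : ((α:ℂ))^3 = (d:ℂ) := by exact_mod_cast hα3
  -- cube root of unity
  set s : ℝ := Real.sqrt 3 with hsdef
  have hsR : s^2 = 3 := Real.sq_sqrt (by norm_num)
  have hs : ((s:ℝ):ℂ)^2 = 3 := by exact_mod_cast hsR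
  set ω : ℂ := (-1 + (s:ℂ)*Complex.I)/2 with hω
  have hω2 : ω^2 = (-1 - (s:ℂ)*Complex.I)/2 := by
    rw [hω]; linear_combination (Complex.I^2 * hs + 3*Complex.I_sq)/4
  have hω3 : ω^3 = 1 := by
    have h : ω^3 = ω^2 * ω := by ring
    rw [h, hω2, hω]
    linear_combination (-(Complex.I^2 * hs + 3*Complex.I_sq))/4
  have hωsum : 1 + ω + ω^2 = 0 := by rw [hω2, hω]; ring
  -- conjugate roots
  set β₂ : ℂ := ω * (α:ℂ) with hβ₂def
  set β₃ : ℂ := ω^2 * (α:ℂ) with hβ₃def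
  have hβ₂3 : β₂^3 = (d:ℂ) := by rw [hβ₂def, mul_pow, hω3, one_mul, hαC3]
  have hβ₃3 : β₃^3 = (d:ℂ) := by
    rw [hβ₃def, mul_pow, ← pow_mul]
    rw [show (2*3 : ℕ) = 3*2 from by ring, pow_mul, hω3, one_pow, one_mul, hαC3]
  -- the denominator constant
  set cq : ℚ := (z:ℚ)^3 + (d:ℚ)^2 with hcqdef
  have hcq0 : (0:ℚ) < cq := by
    have h1 : (1:ℚ) ≤ (z:ℚ) := by exact_mod_cast hz
    have h2 : (1:ℚ) ≤ (d:ℚ) := by exact_mod_cast hd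
    positivity
  have hcqC : (cq:ℂ) = (z:ℂ)^3 + (d:ℂ)^2 := by rw [hcqdef]; push_cast; ring
  have hcqC0 : (cq:ℂ) ≠ 0 := Rat.cast_ne_zero.mpr hcq0.ne'
  have hicq : ((cq:ℂ))⁻¹ * (cq:ℂ) = 1 := inv_mul_cancel₀ hcqC0
  have hdq0 : (0:ℚ) < (d:ℚ) := by exact_mod_cast hd
  -- the linear forms
  set S : ℂ → ℕ → ℂ := fun β m =>
    ((bcf p q 0 1 (p 0) m : ℚ) : ℂ) + ((bcf p q 1 0 (q 0) m : ℚ) : ℂ) * β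
      + ((bcf p q 0 0 1 m : ℚ) : ℂ) * β^2 with hSdef
  have hrec : ∀ (β : ℂ) (m : ℕ), S β (m+3)
      = (p (m+1) : ℂ) * S β (m+2) + (q (m+1) : ℂ) * S β (m+1) + S β m := by
    intro β m
    simp only [hSdef]
    rw [show bcf p q 0 1 (p 0) (m+3) = p (m + 1) * bcf p q 0 1 (p 0) (m + 2)
          + q (m + 1) * bcf p q 0 1 (p 0) (m + 1) + bcf p q 0 1 (p 0) m from by simp [bcf],
        show bcf p q 1 0 (q 0) (m+3) = p (m + 1) * bcf p q 1 0 (q 0) (m + 2)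
          + q (m + 1) * bcf p q 1 0 (q 0) (m + 1) + bcf p q 1 0 (q 0) m from by simp [bcf],
        show bcf p q 0 0 1 (m+3) = p (m + 1) * bcf p q 0 0 1 (m + 2)
          + q (m + 1) * bcf p q 0 0 1 (m + 1) + bcf p q 0 0 1 m from by simp [bcf]]
    push_cast
    ring
  have hS0 : ∀ β : ℂ, S β 0 = β := by intro β; simp [hSdef, bcf]
  have hS1 : ∀ β : ℂ, S β 1 = 1 := by intro β; simp [hSdef, bcf]
  have hS2 : ∀ β : ℂ, S β 2 = (z:ℂ) + β^2 := by
    intro β; simp [hSdef, bcf, hp0, hq0]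
  -- core algebraic identity
  have core : ∀ β : ℂ, β^3 = (d:ℂ) →
      ((z:ℂ)+β^2)^3 = 3*(z:ℂ)*((z:ℂ)+β^2)^2 - 3*(z:ℂ)^2*((z:ℂ)+β^2) + (cq:ℂ) := by
    intro β hβ
    rw [hcqC]
    linear_combination (β^3 + (d:ℂ)) * hβ
  -- closed form for S, by period-3 induction (in multiplied form)
  have key : ∀ β : ℂ, β^3 = (d:ℂ) → ∀ j : ℕ,
      S β (3*j+2) * (cq:ℂ)^j = ((z:ℂ)+β^2)^(3*j+1) ∧
      S β (3*j+3) * ((d:ℂ) * (cq:ℂ)^j) = ((z:ℂ)+β^2)^(3*j+2) ∧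
      S β (3*j+4) * (cq:ℂ)^(j+1) = ((z:ℂ)+β^2)^(3*j+3) := by
    intro β hβ j
    induction j with
    | zero =>
      have h3 : S β 3 * (d:ℂ) = ((z:ℂ)+β^2)^2 := by
        have h := hrec β 0
        rw [hS2 β, hS1 β, hS0 β, hp1, hq1] at h
        rw [show (3:ℕ) = 0+3 from by norm_num, h]
        push_cast
        linear_combination (-β)*hβ + (2*(z:ℂ)*((z:ℂ)+β^2) - (z:ℂ)^2)*hicd
      refine ⟨by simpa using hS2 β, by simpa using h3, ?_⟩
      have h := hrec β 1
      rw [hS2 β, hS1 β, hp2 2 (by norm_num) (by norm_num),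
          hq2 2 (by norm_num) (by norm_num)] at h
      rw [show (3*0+4 : ℕ) = 1+3 from by norm_num, h]
      push_cast
      linear_combination (-1 : ℂ) * core β hβ
        + (3*(d:ℂ)*(z:ℂ)*(S β 3) - 3*(z:ℂ)^2*((z:ℂ)+β^2))*hicq + 3*(z:ℂ)*h3
    | succ k ih =>
      obtain ⟨ih1, ih2, ih3⟩ := ih
      have e1 : S β (3*(k+1)+2) * (cq:ℂ)^(k+1) = ((z:ℂ)+β^2)^(3*(k+1)+1) := by
        have h := hrec β (3*k+2)
        rw [show (3*k+2)+3 = 3*(k+1)+2 from by ring,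
            show (3*k+2)+2 = 3*k+4 from by ring,
            show (3*k+2)+1 = 3*k+3 from by ring,
            hp3 (3*k+3) (by omega) (by omega), hq3 (3*k+3) (by omega) (by omega)] at h
        rw [h]
        push_cast
        linear_combination 3*(z:ℂ)*ih3
          + (-3*(d:ℂ)*(z:ℂ)^2*(S β (3*k+3))*(cq:ℂ)^k)*hicq
          + (-3*(z:ℂ)^2)*ih2 + (cq:ℂ)*ih1
          + (-(((z:ℂ)+β^2)^(3*k+1)))*(core β hβ)
      have e2 : S β (3*(k+1)+3) * ((d:ℂ) * (cq:ℂ)^(k+1)) = ((z:ℂ)+β^2)^(3*(k+1)+2) := by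
        have h := hrec β (3*k+3)
        rw [show (3*k+3)+3 = 3*(k+1)+3 from by ring,
            show (3*k+3)+2 = 3*(k+1)+2 from by ring,
            show (3*k+3)+1 = 3*k+4 from by ring,
            hp4 (3*k+4) (by omega) (by omega), hq4 (3*k+4) (by omega) (by omega)] at h
        rw [h]
        push_cast
        linear_combination ((3*(z:ℂ)*(S β (3*(k+1)+2)) - 3*(z:ℂ)^2*(S β (3*k+4)))*(cq:ℂ)^(k+1))*hicd
          + 3*(z:ℂ)*e1 + (-3*(z:ℂ)^2)*ih3 + (cq:ℂ)*ih2
          + (-(((z:ℂ)+β^2)^(3*k+2)))*(core β hβ)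
      have e3 : S β (3*(k+1)+4) * (cq:ℂ)^(k+2) = ((z:ℂ)+β^2)^(3*(k+1)+3) := by
        have h := hrec β (3*k+4)
        rw [show (3*k+4)+3 = 3*(k+1)+4 from by ring,
            show (3*k+4)+2 = 3*(k+1)+3 from by ring,
            show (3*k+4)+1 = 3*(k+1)+2 from by ring,
            hp2 (3*(k+1)+2) (by omega) (by omega), hq2 (3*(k+1)+2) (by omega) (by omega)] at h
        rw [h]
        push_cast
        linear_combination ((3*(d:ℂ)*(z:ℂ)*(S β (3*(k+1)+3)) - 3*(z:ℂ)^2*(S β (3*(k+1)+2)))*(cq:ℂ)^(k+1))*hicq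
          + 3*(z:ℂ)*e2 + (-3*(z:ℂ)^2)*e1 + (cq:ℂ)*ih3
          + (-(((z:ℂ)+β^2)^(3*k+3)))*(core β hβ)
      exact ⟨e1, by simpa using e2, by
        have : k+1+1 = k+2 := rfl
        simpa [this] using e3⟩
  clear hdcube
  -- per-n closed form
  set w : ℕ → ℚ := fun n => if n % 3 = 0 then cq^(n/3)
    else if n % 3 = 1 then (d:ℚ)*cq^(n/3) else cq^(n/3+1) with hwdef
  have hw0 : ∀ n, ((w n : ℚ):ℂ) ≠ 0 := by
    intro n
    refine Rat.cast_ne_zero.mpr ?_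
    show (if n % 3 = 0 then cq^(n/3)
      else if n % 3 = 1 then (d:ℚ)*cq^(n/3) else cq^(n/3+1)) ≠ 0
    split_ifs <;> positivity
  have keyn : ∀ β : ℂ, β^3 = (d:ℂ) → ∀ n : ℕ,
      S β (n+2) * ((w n : ℚ):ℂ) = ((z:ℂ)+β^2)^(n+1) := by
    intro β hβ n
    obtain ⟨j, r, hr, rfl⟩ : ∃ j r, r < 3 ∧ n = 3*j + r := ⟨n/3, n%3, by omega, by omega⟩
    have hkey := key β hβ j
    interval_cases r
    · have h1 : (3*j+0) % 3 = 0 := by omega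
      have h2 : (3*j+0) / 3 = j := by omega
      rw [hwdef]
      simp only [h1, h2, if_pos rfl]
      push_cast
      simpa using hkey.1
    · have h1 : (3*j+1) % 3 = 1 := by omega
      have h2 : (3*j+1) / 3 = j := by omega
      rw [hwdef]
      simp only [h1, h2]
      norm_num
      push_cast
      have := hkey.2.1
      rw [show 3*j+1+2 = 3*j+3 from by ring]
      convert this using 2 <;> push_cast <;> ring
    · have h1 : (3*j+2) % 3 = 2 := by omega
      have h2 : (3*j+2) / 3 = j := by omega
      rw [hwdef]
      simp only [h1, h2]
      norm_num
      push_cast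
      have := hkey.2.2
      rw [show 3*j+2+2 = 3*j+4 from by ring]
      convert this using 2 <;> push_cast <;> ring
  -- the real quantity u₁ = z + α²
  set u₁ : ℝ := (z:ℝ) + α^2 with hu₁def
  have hu₁0 : 0 < u₁ := by rw [hu₁def]; positivity
  have hu₁C : (z:ℂ) + ((α:ℝ):ℂ)^2 = ((u₁:ℝ):ℂ) := by rw [hu₁def]; push_cast; ring
  have hu₁C0 : ((u₁:ℝ):ℂ) ≠ 0 := Complex.ofReal_ne_zero.mpr hu₁0.ne'
  -- the conjugates are smaller in absolute value
  have hβ₂sq : β₂^2 = ω^2 * ((α:ℝ):ℂ)^2 := by rw [hβ₂def]; ring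
  have hβ₃sq : β₃^2 = ω * ((α:ℝ):ℂ)^2 := by
    rw [hβ₃def]; linear_combination (ω*((α:ℝ):ℂ)^2)*hω3
  have habs2 : ‖(z:ℂ)+β₂^2‖ < u₁ := by
    have hrepr : (z:ℂ)+β₂^2
        = Complex.ofReal ((z:ℝ) - α^2/2) + Complex.ofReal (-(s*α^2/2)) * Complex.I := by
      rw [hβ₂sq, hω2]; push_cast; ring
    rw [hrepr, Complex.norm_def, Complex.normSq_add_mul_I]
    rw [Real.sqrt_lt' hu₁0, hu₁def]
    nlinarith [hsR, mul_pos hz0R (pow_pos hα0 2), sq_nonneg α, pow_pos hα0 2]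
  have habs3 : ‖(z:ℂ)+β₃^2‖ < u₁ := by
    have hrepr : (z:ℂ)+β₃^2
        = Complex.ofReal ((z:ℝ) - α^2/2) + Complex.ofReal (s*α^2/2) * Complex.I := by
      rw [hβ₃sq, hω]; push_cast; ring
    rw [hrepr, Complex.norm_def, Complex.normSq_add_mul_I]
    rw [Real.sqrt_lt' hu₁0, hu₁def]
    nlinarith [hsR, mul_pos hz0R (pow_pos hα0 2), sq_nonneg α, pow_pos hα0 2]
  -- the geometric ratios
  set T₂ : ℕ → ℂ := fun n => (((z:ℂ)+β₂^2)/((u₁:ℝ):ℂ))^(n+1) with hT₂def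
  set T₃ : ℕ → ℂ := fun n => (((z:ℂ)+β₃^2)/((u₁:ℝ):ℂ))^(n+1) with hT₃def
  have hT₂ : Tendsto T₂ atTop (𝓝 0) := by
    have hn : ‖((z:ℂ)+β₂^2)/((u₁:ℝ):ℂ)‖ < 1 := by
      rw [norm_div, Complex.norm_real, Real.norm_of_nonneg hu₁0.le, div_lt_one hu₁0]
      exact habs2
    exact (tendsto_pow_atTop_nhds_zero_of_norm_lt_one hn).comp (tendsto_add_atTop_nat 1)
  have hT₃ : Tendsto T₃ atTop (𝓝 0) := by
    have hn : ‖((z:ℂ)+β₃^2)/((u₁:ℝ):ℂ)‖ < 1 := by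
      rw [norm_div, Complex.norm_real, Real.norm_of_nonneg hu₁0.le, div_lt_one hu₁0]
      exact habs3
    exact (tendsto_pow_atTop_nhds_zero_of_norm_lt_one hn).comp (tendsto_add_atTop_nat 1)
  -- ratios of the linear forms
  have hS2T : ∀ n : ℕ, S β₂ (n+2) = S ((α:ℝ):ℂ) (n+2) * T₂ n := by
    intro n
    apply mul_right_cancel₀ (hw0 n)
    rw [keyn β₂ hβ₂3 n]
    rw [show S ((α:ℝ):ℂ) (n+2) * T₂ n * ((w n : ℚ):ℂ)
        = (S ((α:ℝ):ℂ) (n+2) * ((w n : ℚ):ℂ)) * T₂ n from by ring,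
      keyn ((α:ℝ):ℂ) hαC3 n, hu₁C]
    simp only [hT₂def]
    rw [div_pow, ← mul_div_assoc, mul_comm, mul_div_assoc,
      div_self (pow_ne_zero _ hu₁C0), mul_one]
  have hS3T : ∀ n : ℕ, S β₃ (n+2) = S ((α:ℝ):ℂ) (n+2) * T₃ n := by
    intro n
    apply mul_right_cancel₀ (hw0 n)
    rw [keyn β₃ hβ₃3 n]
    rw [show S ((α:ℝ):ℂ) (n+2) * T₃ n * ((w n : ℚ):ℂ)
        = (S ((α:ℝ):ℂ) (n+2) * ((w n : ℚ):ℂ)) * T₃ n from by ring,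
      keyn ((α:ℝ):ℂ) hαC3 n, hu₁C]
    simp only [hT₃def]
    rw [div_pow, ← mul_div_assoc, mul_comm, mul_div_assoc,
      div_self (pow_ne_zero _ hu₁C0), mul_one]
  have hS1ne : ∀ n : ℕ, S ((α:ℝ):ℂ) (n+2) ≠ 0 := by
    intro n h0
    have h1 := keyn ((α:ℝ):ℂ) hαC3 n
    rw [h0, zero_mul, hu₁C] at h1
    exact (pow_ne_zero (n+1) hu₁C0) h1.symm
  -- Vandermonde inversion identities
  have hAid : ∀ m : ℕ, 3*((bcf p q 0 1 (p 0) m : ℚ):ℂ)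
      = S ((α:ℝ):ℂ) m + S β₂ m + S β₃ m := by
    intro m
    simp only [hSdef]
    rw [hβ₂def, hβ₃def]
    linear_combination (-(((bcf p q 1 0 (q 0) m : ℚ):ℂ))*((α:ℝ):ℂ)
        - ((bcf p q 0 0 1 m : ℚ):ℂ)*((α:ℝ):ℂ)^2)*hωsum
      + (-(((bcf p q 0 0 1 m : ℚ):ℂ)*((α:ℝ):ℂ)^2*ω))*hω3
  have hCid : ∀ m : ℕ, 3*((bcf p q 0 0 1 m : ℚ):ℂ)*((α:ℝ):ℂ)^2
      = S ((α:ℝ):ℂ) m + ω * S β₂ m + ω^2 * S β₃ m := by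
    intro m
    simp only [hSdef]
    rw [hβ₂def, hβ₃def]
    linear_combination (-(((bcf p q 0 1 (p 0) m : ℚ):ℂ))
        - ((bcf p q 1 0 (q 0) m : ℚ):ℂ)*((α:ℝ):ℂ))*hωsum
      + (-(((bcf p q 1 0 (q 0) m : ℚ):ℂ)*((α:ℝ):ℂ)*ω)
        - ((bcf p q 0 0 1 m : ℚ):ℂ)*((α:ℝ):ℂ)^2*(ω^3+2))*hω3
  have hBid : ∀ m : ℕ, 3*((bcf p q 1 0 (q 0) m : ℚ):ℂ)*((α:ℝ):ℂ)
      = S ((α:ℝ):ℂ) m + ω^2 * S β₂ m + ω * S β₃ m := by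
    intro m
    simp only [hSdef]
    rw [hβ₂def, hβ₃def]
    linear_combination (-(((bcf p q 0 1 (p 0) m : ℚ):ℂ))
        - ((bcf p q 0 0 1 m : ℚ):ℂ)*((α:ℝ):ℂ)^2)*hωsum
      + (-(2*((bcf p q 1 0 (q 0) m : ℚ):ℂ)*((α:ℝ):ℂ))
        - ((bcf p q 0 0 1 m : ℚ):ℂ)*((α:ℝ):ℂ)^2*(ω+ω^2))*hω3
  -- limits of numerators and denominators
  have hNlim : Tendsto (fun n => 1 + T₂ n + T₃ n) atTop (𝓝 1) := by
    have h := (tendsto_const_nhds (x := (1:ℂ)) (f := atTop)).add (hT₂.add hT₃)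
    have h2 : (1:ℂ) + (0 + 0) = 1 := by norm_num
    rw [h2] at h
    exact h.congr (fun n => by ring)
  have hDlim : Tendsto (fun n => 1 + ω * T₂ n + ω^2 * T₃ n) atTop (𝓝 1) := by
    have h := (tendsto_const_nhds (x := (1:ℂ)) (f := atTop)).add
      ((hT₂.const_mul ω).add (hT₃.const_mul (ω^2)))
    have h2 : (1:ℂ) + (ω * 0 + ω^2 * 0) = 1 := by ring
    rw [h2] at h
    exact h.congr (fun n => by ring)
  have hMlim : Tendsto (fun n => 1 + ω^2 * T₂ n + ω * T₃ n) atTop (𝓝 1) := by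
    have h := (tendsto_const_nhds (x := (1:ℂ)) (f := atTop)).add
      ((hT₂.const_mul (ω^2)).add (hT₃.const_mul ω))
    have h2 : (1:ℂ) + (ω^2 * 0 + ω * 0) = 1 := by ring
    rw [h2] at h
    exact h.congr (fun n => by ring)
  have heventD : ∀ᶠ n in atTop, (1 + ω * T₂ n + ω^2 * T₃ n : ℂ) ≠ 0 :=
    hDlim.eventually_ne one_ne_zero
  have hα2 : α^2 = (d:ℝ)^((2:ℝ)/3) := by
    rw [hαdef, ← Real.rpow_natCast ((d:ℝ)^((1:ℝ)/3)) 2, ← Real.rpow_mul hd0R.le]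
    norm_num
  constructor
  · -- A/C → d^(2/3)
    have hev : ∀ᶠ n in atTop,
        ((((bcf p q 0 1 (p 0) (n+2) : ℚ):ℝ)/((bcf p q 0 0 1 (n+2) : ℚ):ℝ) : ℝ) : ℂ)
          = ((α:ℝ):ℂ)^2 * (1 + T₂ n + T₃ n) / (1 + ω * T₂ n + ω^2 * T₃ n) := by
      filter_upwards [heventD] with n hD
      have hA' : 3*((bcf p q 0 1 (p 0) (n+2) : ℚ):ℂ)
          = S ((α:ℝ):ℂ) (n+2) * (1 + T₂ n + T₃ n) := by
        rw [hAid (n+2), hS2T n, hS3T n]; ring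
      have hC' : 3*((bcf p q 0 0 1 (n+2) : ℚ):ℂ)*((α:ℝ):ℂ)^2
          = S ((α:ℝ):ℂ) (n+2) * (1 + ω * T₂ n + ω^2 * T₃ n) := by
        rw [hCid (n+2), hS2T n, hS3T n]; ring
      have hCne : ((bcf p q 0 0 1 (n+2) : ℚ):ℂ) ≠ 0 := by
        intro h0
        rw [h0] at hC'
        simp only [mul_zero, zero_mul] at hC'
        exact (mul_ne_zero (hS1ne n) hD) hC'.symm
      rw [show ∀ a b : ℚ, (((a:ℝ)/(b:ℝ) : ℝ):ℂ) = (a:ℂ)/(b:ℂ) from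
        fun a b => by push_cast; ring]
      rw [div_eq_div_iff hCne hD]
      linear_combination ((1 + ω * T₂ n + ω^2 * T₃ n)/3)*hA'
        + (-(1 + T₂ n + T₃ n)/3)*hC'
    have hlimC : Tendsto (fun n => ((α:ℝ):ℂ)^2 * (1 + T₂ n + T₃ n)
        / (1 + ω * T₂ n + ω^2 * T₃ n)) atTop (𝓝 (((α:ℝ):ℂ)^2)) := by
      have h := (Tendsto.const_mul (((α:ℝ):ℂ)^2) hNlim).div hDlim one_ne_zero
      have h2 : ((α:ℝ):ℂ)^2 * 1 / 1 = ((α:ℝ):ℂ)^2 := by ring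
      rw [h2] at h
      exact h
    have hf := hlimC.congr' (by filter_upwards [hev] with n h; exact h.symm)
    have hre := (Complex.continuous_re.tendsto _).comp hf
    have h3 : ((((α:ℝ):ℂ))^2).re = (d:ℝ)^((2:ℝ)/3) := by
      rw [← Complex.ofReal_pow, Complex.ofReal_re, hα2]
    rw [h3] at hre
    exact hre.congr (fun n => by simp)
  · -- B/C → d^(1/3)
    have hev : ∀ᶠ n in atTop,
        ((((bcf p q 1 0 (q 0) (n+2) : ℚ):ℝ)/((bcf p q 0 0 1 (n+2) : ℚ):ℝ) : ℝ) : ℂ)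
          = ((α:ℝ):ℂ) * (1 + ω^2 * T₂ n + ω * T₃ n) / (1 + ω * T₂ n + ω^2 * T₃ n) := by
      filter_upwards [heventD] with n hD
      have hB' : 3*((bcf p q 1 0 (q 0) (n+2) : ℚ):ℂ)*((α:ℝ):ℂ)
          = S ((α:ℝ):ℂ) (n+2) * (1 + ω^2 * T₂ n + ω * T₃ n) := by
        rw [hBid (n+2), hS2T n, hS3T n]; ring
      have hC' : 3*((bcf p q 0 0 1 (n+2) : ℚ):ℂ)*((α:ℝ):ℂ)^2
          = S ((α:ℝ):ℂ) (n+2) * (1 + ω * T₂ n + ω^2 * T₃ n) := by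
        rw [hCid (n+2), hS2T n, hS3T n]; ring
      have hCne : ((bcf p q 0 0 1 (n+2) : ℚ):ℂ) ≠ 0 := by
        intro h0
        rw [h0] at hC'
        simp only [mul_zero, zero_mul] at hC'
        exact (mul_ne_zero (hS1ne n) hD) hC'.symm
      have hαC0 : ((α:ℝ):ℂ) ≠ 0 := Complex.ofReal_ne_zero.mpr hα0.ne'
      rw [show ∀ a b : ℚ, (((a:ℝ)/(b:ℝ) : ℝ):ℂ) = (a:ℂ)/(b:ℂ) from
        fun a b => by push_cast; ring]
      rw [div_eq_div_iff hCne hD]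
      apply mul_left_cancel₀ hαC0
      linear_combination ((1 + ω * T₂ n + ω^2 * T₃ n)/3)*hB'
        + (-(1 + ω^2 * T₂ n + ω * T₃ n)/3)*hC'
    have hlimC : Tendsto (fun n => ((α:ℝ):ℂ) * (1 + ω^2 * T₂ n + ω * T₃ n)
        / (1 + ω * T₂ n + ω^2 * T₃ n)) atTop (𝓝 ((α:ℝ):ℂ)) := by
      have h := (Tendsto.const_mul ((α:ℝ):ℂ) hMlim).div hDlim one_ne_zero
      have h2 : ((α:ℝ):ℂ) * 1 / 1 = ((α:ℝ):ℂ) := by ring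
      rw [h2] at h
      exact h
    have hf := hlimC.congr' (by filter_upwards [hev] with n h; exact h.symm)
    have hre := (Complex.continuous_re.tendsto _).comp hf
    have h3 : (((α:ℝ):ℂ)).re = α := Complex.ofReal_re α
    rw [h3] at hre
    exact hre.congr (fun n => by simp)
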